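/- Let C be a topologically G-graded C*-algebra. The space 𝒦_G(C) of convolution dominated kernels K : G × G → C (with K(g,h) ∈ C_{gh⁻¹} and norm ‖K‖ = inf{‖κ‖_{ℓ¹(G)} : ‖K(g,h)‖ ≤ |κ(gh⁻¹)| for all g,h}) is a Banach *-algebra under the multiplication (K ∙ L)(g,h) = Σ_k K(g,k)L(k,h) and involution K^∙(g,h) = K(h,g)*. -/

import Mathlib

open Filter Topology

section ConvolutionDominatedKernels

variable {G : Type*} [Group G] {C : Type*} [NormedRing C]

/-- The set of candidate `ℓ¹`-norms of dominating functions for a kernel `K`. -/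
def kernelDomSet (K : G × G → C) : Set ℝ :=
  {c | ∃ κ : G → ℝ, Summable (fun g => |κ g|) ∧
        (∀ g h : G, ‖K (g, h)‖ ≤ |κ (g * h⁻¹)|) ∧ c = ∑' g : G, |κ g|}

/-- The norm of a convolution dominated kernel. -/
noncomputable def kernelNorm (K : G × G → C) : ℝ := sInf (kernelDomSet K)

end ConvolutionDominatedKernels

namespace CDK

variable {G : Type*} [Group G] {C : Type*} [NormedRing C]

lemma nonneg_of_mem {K : G × G → C} {c : ℝ} (h : c ∈ kernelDomSet K) : 0 ≤ c := by
  obtain ⟨κ, hκ, -, rfl⟩ := h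
  exact tsum_nonneg fun g => abs_nonneg _

lemma bddBelow' (K : G × G → C) : BddBelow (kernelDomSet K) :=
  ⟨0, fun _ hc => nonneg_of_mem hc⟩

lemma norm_nonneg' (K : G × G → C) : 0 ≤ kernelNorm K :=
  Real.sInf_nonneg fun _ hc => nonneg_of_mem hc

lemma kernelNorm_le {K : G × G → C} {c : ℝ} (h : c ∈ kernelDomSet K) : kernelNorm K ≤ c :=
  csInf_le (bddBelow' K) h

lemma norm_apply_le {K : G × G → C} (hne : (kernelDomSet K).Nonempty) (g h : G) :
    ‖K (g, h)‖ ≤ kernelNorm K := by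
  refine le_csInf hne ?_
  rintro c ⟨κ, hκ, hdom, rfl⟩
  exact (hdom g h).trans (Summable.le_tsum hκ _ fun _ _ => abs_nonneg _)

lemma add_mem {K L M : G × G → C} (hM : ∀ p : G × G, ‖M p‖ ≤ ‖K p‖ + ‖L p‖)
    {c d : ℝ} (hc : c ∈ kernelDomSet K) (hd : d ∈ kernelDomSet L) :
    c + d ∈ kernelDomSet M := by
  obtain ⟨κ, hκ, hdκ, rfl⟩ := hc
  obtain ⟨lam, hlam, hdlam, rfl⟩ := hd
  have habs : ∀ x : G, |(|κ x| + |lam x|)| = |κ x| + |lam x| :=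
    fun x => abs_of_nonneg (add_nonneg (abs_nonneg _) (abs_nonneg _))
  refine ⟨fun x => |κ x| + |lam x|, ?_, ?_, ?_⟩
  · exact (summable_congr habs).mpr (hκ.add hlam)
  · intro g h
    rw [habs]
    exact (hM (g, h)).trans (add_le_add (hdκ g h) (hdlam g h))
  · rw [tsum_congr habs, Summable.tsum_add hκ hlam]

lemma norm_add_le' {K L M : G × G → C} (hM : ∀ p : G × G, ‖M p‖ ≤ ‖K p‖ + ‖L p‖)
    (hK : (kernelDomSet K).Nonempty) (hL : (kernelDomSet L).Nonempty) :
    kernelNorm M ≤ kernelNorm K + kernelNorm L := by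
  rw [← sub_le_iff_le_add']
  refine le_csInf hL fun d hd => ?_
  rw [sub_le_iff_le_add', ← sub_le_iff_le_add]
  refine le_csInf hK fun c hc => ?_
  rw [sub_le_iff_le_add]
  exact (kernelNorm_le (add_mem hM hc hd)).trans (by linarith)

lemma domSet_mono {K M : G × G → C} (h : ∀ p : G × G, ‖M p‖ ≤ ‖K p‖) :
    kernelDomSet K ⊆ kernelDomSet M := by
  rintro c ⟨κ, hκ, hdom, rfl⟩
  exact ⟨κ, hκ, fun g h' => (h (g, h')).trans (hdom g h'), rfl⟩

lemma domSet_congr {K M : G × G → C} (h : ∀ p : G × G, ‖M p‖ = ‖K p‖) :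
    kernelDomSet M = kernelDomSet K :=
  le_antisymm (domSet_mono fun p => (h p).ge) (domSet_mono fun p => (h p).le)

/-- The equivalence `k ↦ g * k⁻¹`. -/
def mulInvEquiv (g : G) : G ≃ G where
  toFun k := g * k⁻¹
  invFun t := t⁻¹ * g
  left_inv k := by group
  right_inv t := by group

lemma mul_dom {K L : G × G → C} {κ lam : G → ℝ}
    (hκ : Summable fun g => |κ g|) (hlam : Summable fun g => |lam g|)
    (hdκ : ∀ g h : G, ‖K (g, h)‖ ≤ |κ (g * h⁻¹)|)
    (hdlam : ∀ g h : G, ‖L (g, h)‖ ≤ |lam (g * h⁻¹)|) :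
    (∀ g h : G, Summable fun k => ‖K (g, k) * L (k, h)‖) ∧
    ((∑' g : G, |κ g|) * (∑' g : G, |lam g|)) ∈
      kernelDomSet (fun p : G × G => ∑' k : G, K (p.1, k) * L (k, p.2)) := by
  set A := ∑' g : G, |κ g| with hA
  set B := ∑' g : G, |lam g| with hB
  have hBle : ∀ x : G, |lam x| ≤ B := fun x => Summable.le_tsum hlam x fun _ _ => abs_nonneg _
  set F : G × G → ℝ := fun q => |κ q.1| * |lam (q.1⁻¹ * q.2)| with hFdef
  have hF0 : ∀ q : G × G, 0 ≤ F q := fun q => mul_nonneg (abs_nonneg _) (abs_nonneg _)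
  have hfib : ∀ t : G, Summable fun x => F (t, x) := by
    intro t
    have := ((Equiv.mulLeft t⁻¹).summable_iff.mpr hlam).mul_left |κ t|
    simpa [Function.comp, F] using this
  have hfibsum : ∀ t : G, (∑' x : G, F (t, x)) = |κ t| * B := by
    intro t
    have h1 : (∑' x : G, |lam (t⁻¹ * x)|) = B := by
      have := (Equiv.mulLeft t⁻¹).tsum_eq fun y => |lam y|
      simpa using this
    calc (∑' x : G, F (t, x)) = ∑' x : G, |κ t| * |lam (t⁻¹ * x)| := rfl
      _ = |κ t| * ∑' x : G, |lam (t⁻¹ * x)| := tsum_mul_left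
      _ = |κ t| * B := by rw [h1]
  have hFsum : Summable F := by
    refine (summable_prod_of_nonneg hF0).mpr ⟨hfib, ?_⟩
    exact (summable_congr hfibsum).mpr (hκ.mul_right B)
  set μ : G → ℝ := fun x => ∑' t : G, F (t, x) with hμdef
  have hμ0 : ∀ x, 0 ≤ μ x := fun x => tsum_nonneg fun t => hF0 _
  have hswap : Summable fun q : G × G => F q.swap := hFsum.prod_symm
  have hswapfacts := (summable_prod_of_nonneg (fun q : G × G => hF0 q.swap)).mp hswap
  have hμsum : Summable μ := hswapfacts.2
  have hμtsum : (∑' x : G, μ x) = A * B := by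
    calc (∑' x : G, μ x) = ∑' q : G × G, F q.swap := (Summable.tsum_prod' hswap hswapfacts.1).symm
      _ = ∑' q : G × G, F q := by
          have := (Equiv.prodComm G G).tsum_eq F
          simpa using this
      _ = ∑' t : G, ∑' x : G, F (t, x) := Summable.tsum_prod' hFsum hfib
      _ = ∑' t : G, |κ t| * B := tsum_congr hfibsum
      _ = A * B := tsum_mul_right
  have hre : ∀ g : G, Summable fun k => |κ (g * k⁻¹)| := by
    intro g
    have := (mulInvEquiv g).summable_iff.mpr hκ
    simpa [Function.comp_def, mulInvEquiv] using this
  have hnorm_le : ∀ g h k : G, ‖K (g, k) * L (k, h)‖ ≤ |κ (g * k⁻¹)| * |lam (k * h⁻¹)| := by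
    intro g h k
    exact (norm_mul_le _ _).trans
      (mul_le_mul (hdκ g k) (hdlam k h) (norm_nonneg _) (abs_nonneg _))
  have hsummable : ∀ g h : G, Summable fun k => ‖K (g, k) * L (k, h)‖ := by
    intro g h
    refine Summable.of_nonneg_of_le (fun k => norm_nonneg _)
      (fun k => (hnorm_le g h k).trans (mul_le_mul_of_nonneg_left (hBle _) (abs_nonneg _)))
      ((hre g).mul_right B)
  have hconvsummable : ∀ g h : G, Summable fun k => |κ (g * k⁻¹)| * |lam (k * h⁻¹)| := by
    intro g h
    refine Summable.of_nonneg_of_le (fun k => mul_nonneg (abs_nonneg _) (abs_nonneg _))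
      (fun k => mul_le_mul_of_nonneg_left (hBle _) (abs_nonneg _)) ((hre g).mul_right B)
  have hconveq : ∀ g h : G, (∑' k : G, |κ (g * k⁻¹)| * |lam (k * h⁻¹)|) = μ (g * h⁻¹) := by
    intro g h
    have hfe : ∀ k : G, F (mulInvEquiv g k, g * h⁻¹) = |κ (g * k⁻¹)| * |lam (k * h⁻¹)| := by
      intro k
      have hgrp : ((g * k⁻¹)⁻¹ * (g * h⁻¹)) = k * h⁻¹ := by group
      show |κ (g * k⁻¹)| * |lam ((g * k⁻¹)⁻¹ * (g * h⁻¹))| = _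
      rw [hgrp]
    calc (∑' k : G, |κ (g * k⁻¹)| * |lam (k * h⁻¹)|)
        = ∑' k : G, F (mulInvEquiv g k, g * h⁻¹) := tsum_congr fun k => (hfe k).symm
      _ = ∑' t : G, F (t, g * h⁻¹) := (mulInvEquiv g).tsum_eq fun t => F (t, g * h⁻¹)
      _ = μ (g * h⁻¹) := rfl
  have hkey : ∀ g h : G, ‖∑' k : G, K (g, k) * L (k, h)‖ ≤ μ (g * h⁻¹) := by
    intro g h
    calc ‖∑' k : G, K (g, k) * L (k, h)‖ ≤ ∑' k : G, ‖K (g, k) * L (k, h)‖ :=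
          norm_tsum_le_tsum_norm (hsummable g h)
      _ ≤ ∑' k : G, |κ (g * k⁻¹)| * |lam (k * h⁻¹)| :=
          Summable.tsum_le_tsum (hnorm_le g h) (hsummable g h) (hconvsummable g h)
      _ = μ (g * h⁻¹) := hconveq g h
  refine ⟨hsummable, μ, ?_, ?_, ?_⟩
  · exact (summable_congr fun x => abs_of_nonneg (hμ0 x)).mpr hμsum
  · intro g h
    rw [abs_of_nonneg (hμ0 _)]
    exact hkey g h
  · rw [tsum_congr fun x => abs_of_nonneg (hμ0 x), hμtsum]

lemma star_subset [StarRing C] [CStarRing C] (K : G × G → C) :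
    kernelDomSet K ⊆ kernelDomSet (fun p : G × G => star (K (p.2, p.1))) := by
  rintro c ⟨κ, hκ, hdom, rfl⟩
  refine ⟨fun x => κ x⁻¹, ?_, ?_, ?_⟩
  · have := (Equiv.inv G).summable_iff (f := fun x => |κ x|)
    exact this.mpr hκ
  · intro g h
    show ‖star (K (h, g))‖ ≤ _
    rw [norm_star]
    have := hdom h g
    simpa [mul_inv_rev] using this
  · exact ((Equiv.inv G).tsum_eq fun x => |κ x|).symm

end CDK

open CDK in
/-- For a topologically `G`-graded C*-algebra `C`, the space `𝒦_G(C)` of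
convolution dominated kernels `K : G × G → C` (with `K (g,h) ∈ C_{g h⁻¹}` and norm given by
the infimum of `ℓ¹`-norms of dominating functions) is a Banach *-algebra for the product
`(K ∙ L)(g,h) = ∑_k K(g,k) L(k,h)` and involution `K^∙(g,h) = K(h,g)*`. -/
theorem convolution_dominated_kernels_banach_star_algebra {G : Type*} [Group G]
    {C : Type*} [NormedRing C] [StarRing C] [CStarRing C]
    [NormedAlgebra ℂ C] [StarModule ℂ C] [CompleteSpace C]
    (𝔠 : G → Submodule ℂ C)
    (hclosed : ∀ g, IsClosed (𝔠 g : Set C))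
    (hmulsub : ∀ g h : G, ∀ x ∈ 𝔠 g, ∀ y ∈ 𝔠 h, x * y ∈ 𝔠 (g * h))
    (hstarsub : ∀ g : G, ∀ x ∈ 𝔠 g, star x ∈ 𝔠 g⁻¹)
    -- membership predicate for 𝒦_G(C)
    (mem𝒦 : (G × G → C) → Prop)
    (hmem : ∀ K, mem𝒦 K ↔ ((∀ g h : G, K (g, h) ∈ 𝔠 (g * h⁻¹)) ∧
        (kernelDomSet K).Nonempty)) :
    -- vector space structure, with triangle inequality
    (∀ K L, mem𝒦 K → mem𝒦 L → mem𝒦 (K + L) ∧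
        kernelNorm (K + L) ≤ kernelNorm K + kernelNorm L) ∧
    (∀ (c : ℂ) K, mem𝒦 K → mem𝒦 (c • K)) ∧
    -- closed under the product, with submultiplicative norm
    (∀ K L, mem𝒦 K → mem𝒦 L →
        mem𝒦 (fun p => ∑' k : G, K (p.1, k) * L (k, p.2)) ∧
        kernelNorm (fun p : G × G => ∑' k : G, K (p.1, k) * L (k, p.2)) ≤
          kernelNorm K * kernelNorm L) ∧
    -- closed under the involution, isometrically
    (∀ K, mem𝒦 K →
        mem𝒦 (fun p : G × G => star (K (p.2, p.1))) ∧
        kernelNorm (fun p : G × G => star (K (p.2, p.1))) = kernelNorm K) ∧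
    -- completeness
    (∀ u : ℕ → (G × G → C), (∀ n, mem𝒦 (u n)) →
        (∀ ε > (0 : ℝ), ∃ N, ∀ m ≥ N, ∀ n ≥ N, kernelNorm (u m - u n) < ε) →
        ∃ K, mem𝒦 K ∧ Tendsto (fun n => kernelNorm (u n - K)) atTop (𝓝 0)) := by
  refine ⟨?_, ?_, ?_, ?_, ?_⟩
  · -- addition
    intro K L hK hL
    obtain ⟨hKg, hKne⟩ := (hmem K).mp hK
    obtain ⟨hLg, hLne⟩ := (hmem L).mp hL
    obtain ⟨c, hc⟩ := hKne
    obtain ⟨d, hd⟩ := hLne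
    have htri : ∀ p : G × G, ‖(K + L) p‖ ≤ ‖K p‖ + ‖L p‖ := fun p => norm_add_le _ _
    refine ⟨(hmem _).mpr ⟨fun g h => (𝔠 _).add_mem (hKg g h) (hLg g h),
      ⟨c + d, add_mem htri hc hd⟩⟩, norm_add_le' htri ⟨c, hc⟩ ⟨d, hd⟩⟩
  · -- scalar multiplication
    intro c K hK
    obtain ⟨hKg, hKne⟩ := (hmem K).mp hK
    refine (hmem _).mpr ⟨fun g h => (𝔠 _).smul_mem c (hKg g h), ?_⟩
    obtain ⟨x, κ, hκ, hdom, rfl⟩ := hKne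
    have habs : ∀ y : G, abs (‖c‖ * |κ y|) = ‖c‖ * |κ y| :=
      fun y => abs_of_nonneg (mul_nonneg (norm_nonneg _) (abs_nonneg _))
    refine ⟨∑' y : G, abs (‖c‖ * |κ y|), fun y => ‖c‖ * |κ y|, ?_, ?_, rfl⟩
    · exact (summable_congr habs).mpr (hκ.mul_left _)
    · intro g h
      rw [habs]
      show ‖c • K (g, h)‖ ≤ _
      rw [norm_smul]
      exact mul_le_mul_of_nonneg_left (hdom g h) (norm_nonneg _)
  · -- multiplication
    intro K L hK hL
    obtain ⟨hKg, hKne⟩ := (hmem K).mp hK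
    obtain ⟨hLg, hLne⟩ := (hmem L).mp hL
    obtain ⟨x, κ, hκ, hdκ, hx⟩ := hKne
    obtain ⟨y, lam, hlam, hdlam, hy⟩ := hLne
    have hmd := mul_dom hκ hlam hdκ hdlam
    have hgrade : ∀ g h : G, (∑' k : G, K (g, k) * L (k, h)) ∈ 𝔠 (g * h⁻¹) := by
      intro g h
      have hsum : Summable fun k => K (g, k) * L (k, h) := (hmd.1 g h).of_norm
      refine (hclosed _).mem_of_tendsto hsum.hasSum (Eventually.of_forall fun s => ?_)
      refine Submodule.sum_mem _ fun k _ => ?_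
      have := hmulsub (g * k⁻¹) (k * h⁻¹) _ (hKg g k) _ (hLg k h)
      simpa [mul_assoc] using this
    have hmemKL : mem𝒦 (fun p : G × G => ∑' k : G, K (p.1, k) * L (k, p.2)) :=
      (hmem _).mpr ⟨hgrade, ⟨_, hmd.2⟩⟩
    refine ⟨hmemKL, ?_⟩
    have hb : ∀ ε > (0 : ℝ),
        kernelNorm (fun p : G × G => ∑' k : G, K (p.1, k) * L (k, p.2)) ≤
          (kernelNorm K + ε) * (kernelNorm L + ε) := by
      intro ε hε
      obtain ⟨c', hc', hclt⟩ := Real.lt_sInf_add_pos (s := kernelDomSet K) ⟨x, κ, hκ, hdκ, hx⟩ hε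
      obtain ⟨d', hd', hdlt⟩ := Real.lt_sInf_add_pos (s := kernelDomSet L) ⟨y, lam, hlam, hdlam, hy⟩ hε
      obtain ⟨κ', hκ', hdκ', rfl⟩ := hc'
      obtain ⟨lam', hlam', hdlam', rfl⟩ := hd'
      refine (kernelNorm_le (mul_dom hκ' hlam' hdκ' hdlam').2).trans ?_
      exact mul_le_mul hclt.le hdlt.le (tsum_nonneg fun _ => abs_nonneg _)
        (add_nonneg (norm_nonneg' K) hε.le)
    have hlim : Tendsto (fun m : ℕ => (kernelNorm K + 1 / (m + 1)) * (kernelNorm L + 1 / (m + 1)))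
        atTop (𝓝 ((kernelNorm K + 0) * (kernelNorm L + 0))) :=
      (tendsto_const_nhds.add tendsto_one_div_add_atTop_nhds_zero_nat).mul
        (tendsto_const_nhds.add tendsto_one_div_add_atTop_nhds_zero_nat)
    rw [add_zero, add_zero] at hlim
    exact ge_of_tendsto' hlim fun m => hb _ (by positivity)
  · -- star
    intro K hK
    obtain ⟨hKg, hKne⟩ := (hmem K).mp hK
    have hset : kernelDomSet (fun p : G × G => star (K (p.2, p.1))) = kernelDomSet K := by
      refine le_antisymm ?_ (star_subset K)
      have h2 := star_subset (C := C) (fun p : G × G => star (K (p.2, p.1)))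
      simpa [star_star] using h2
    refine ⟨(hmem _).mpr ⟨fun g h => ?_, hset ▸ hKne⟩, by rw [kernelNorm, kernelNorm, hset]⟩
    have := hstarsub (h * g⁻¹) _ (hKg h g)
    simpa [mul_inv_rev] using this
  · -- completeness
    intro u hu hC
    have hune : ∀ m, (kernelDomSet (u m)).Nonempty := fun m => ((hmem _).mp (hu m)).2
    have hug : ∀ m g h, u m (g, h) ∈ 𝔠 (g * h⁻¹) := fun m => ((hmem _).mp (hu m)).1
    have hsubne : ∀ a b : ℕ, (kernelDomSet (u a - u b)).Nonempty := by
      intro a b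
      obtain ⟨c, hc⟩ := hune a
      obtain ⟨d, hd⟩ := hune b
      exact ⟨c + d, add_mem (fun p => norm_sub_le (u a p) (u b p)) hc hd⟩
    have hNex : ∀ i : ℕ, ∃ N, ∀ m ≥ N, ∀ m' ≥ N, kernelNorm (u m - u m') < (1/2 : ℝ) ^ i :=
      fun i => hC _ (by positivity)
    choose N hN using hNex
    set ν : ℕ → ℕ := fun i => Nat.rec (N 0) (fun i ni => max (ni + 1) (N (i + 1))) i with hν
    have hν_succ : ∀ i, ν i < ν (i + 1) :=
      fun i => lt_of_lt_of_le (Nat.lt_succ_self _) (le_max_left _ _)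
    have hνN : ∀ i, N i ≤ ν i := by
      intro i
      cases i with
      | zero => exact le_rfl
      | succ i => exact le_max_right _ _
    have hmono : StrictMono ν := strictMono_nat_of_lt_succ hν_succ
    have hstep : ∀ i, kernelNorm (u (ν (i + 1)) - u (ν i)) < (1/2 : ℝ) ^ i :=
      fun i => hN i _ ((hνN i).trans (hmono.monotone (Nat.le_succ i))) _ (hνN i)
    have hκex : ∀ i : ℕ, ∃ κ : G → ℝ, Summable (fun g => |κ g|) ∧
        (∀ g h : G, ‖(u (ν (i + 1)) - u (ν i)) (g, h)‖ ≤ |κ (g * h⁻¹)|) ∧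
        (∑' g : G, |κ g|) < (1/2 : ℝ) ^ i := by
      intro i
      obtain ⟨c, hc, hlt⟩ := exists_lt_of_csInf_lt (hsubne _ _) (hstep i)
      obtain ⟨κ, h1, h2, rfl⟩ := hc
      exact ⟨κ, h1, h2, hlt⟩
    choose κ hκs hκd hκlt using hκex
    have hcau : ∀ p : G × G, ∃ z, Tendsto (fun m => u m p) atTop (𝓝 z) := by
      intro p
      apply cauchySeq_tendsto_of_complete
      rw [Metric.cauchySeq_iff]
      intro ε hε
      obtain ⟨M, hM⟩ := hC ε hε
      refine ⟨M, fun a ha b hb => ?_⟩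
      rw [dist_eq_norm]
      exact lt_of_le_of_lt (norm_apply_le (hsubne a b) p.1 p.2) (hM a ha b hb)
    choose K hKlim using hcau
    have hKg : ∀ g h : G, K (g, h) ∈ 𝔠 (g * h⁻¹) := fun g h =>
      (hclosed _).mem_of_tendsto (hKlim (g, h)) (Eventually.of_forall fun m => hug m g h)
    -- dominating functions for `K - u (ν j)`
    have hdomKj : ∀ j : ℕ, ∃ c ∈ kernelDomSet (fun p : G × G => K p - u (ν j) p),
        c ≤ 2 * (1/2 : ℝ) ^ j := by
      intro j
      set F : ℕ × G → ℝ := fun q => |κ (j + q.1) q.2| with hF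
      have hF0 : ∀ q : ℕ × G, 0 ≤ F q := fun q => abs_nonneg _
      have hmarg : Summable fun i : ℕ => ∑' x : G, F (i, x) := by
        refine Summable.of_nonneg_of_le (fun i => tsum_nonneg fun x => abs_nonneg _)
          (fun i => (hκlt (j + i)).le.trans ?_) summable_geometric_two
        rw [pow_add]
        exact mul_le_of_le_one_left (by positivity) (pow_le_one₀ (by norm_num) (by norm_num))
      have hFsum : Summable F :=
        (summable_prod_of_nonneg hF0).mpr ⟨fun i => hκs (j + i), hmarg⟩
      set σ : G → ℝ := fun x => ∑' i : ℕ, F (i, x) with hσ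
      have hσ0 : ∀ x, 0 ≤ σ x := fun x => tsum_nonneg fun i => abs_nonneg _
      have hswap : Summable fun q : G × ℕ => F q.swap := hFsum.prod_symm
      have hswapfacts := (summable_prod_of_nonneg (fun q : G × ℕ => hF0 q.swap)).mp hswap
      have hσsum : Summable σ := hswapfacts.2
      have hσtsum : (∑' x : G, σ x) ≤ 2 * (1/2 : ℝ) ^ j := by
        calc (∑' x : G, σ x) = ∑' q : G × ℕ, F q.swap := (Summable.tsum_prod' hswap hswapfacts.1).symm
          _ = ∑' q : ℕ × G, F q := by
              have := (Equiv.prodComm G ℕ).tsum_eq F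
              simpa using this
          _ = ∑' i : ℕ, ∑' x : G, F (i, x) := Summable.tsum_prod' hFsum fun i => hκs (j + i)
          _ ≤ ∑' i : ℕ, (1/2 : ℝ) ^ j * (1/2) ^ i := by
              refine Summable.tsum_le_tsum (fun i => ?_) hmarg (summable_geometric_two.mul_left _)
              exact (hκlt (j + i)).le.trans_eq (pow_add _ _ _)
          _ = (1/2 : ℝ) ^ j * 2 := by rw [tsum_mul_left, tsum_geometric_two]
          _ = 2 * (1/2 : ℝ) ^ j := mul_comm _ _
      have hdom : ∀ g h : G, ‖K (g, h) - u (ν j) (g, h)‖ ≤ σ (g * h⁻¹) := by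
        intro g h
        have hsub : StrictMono fun t : ℕ => ν (j + t) :=
          hmono.comp fun a b hab => by omega
        have h1 : Tendsto (fun t : ℕ => u (ν (j + t)) (g, h)) atTop (𝓝 (K (g, h))) :=
          (hKlim (g, h)).comp hsub.tendsto_atTop
        have htend : Tendsto (fun t : ℕ => ‖u (ν (j + t)) (g, h) - u (ν j) (g, h)‖) atTop
            (𝓝 ‖K (g, h) - u (ν j) (g, h)‖) := (h1.sub tendsto_const_nhds).norm
        refine le_of_tendsto htend (Eventually.of_forall fun t => ?_)
        have htel : ∀ t : ℕ, ‖u (ν (j + t)) (g, h) - u (ν j) (g, h)‖ ≤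
            ∑ i ∈ Finset.range t, F (i, g * h⁻¹) := by
          intro t
          induction t with
          | zero => simp
          | succ t ih =>
            show ‖u (ν (j + t + 1)) (g, h) - u (ν j) (g, h)‖ ≤ _
            have h2 : ‖u (ν (j + t + 1)) (g, h) - u (ν (j + t)) (g, h)‖ ≤ F (t, g * h⁻¹) :=
              hκd (j + t) g h
            calc ‖u (ν (j + t + 1)) (g, h) - u (ν j) (g, h)‖
                = ‖(u (ν (j + t + 1)) (g, h) - u (ν (j + t)) (g, h)) +
                    (u (ν (j + t)) (g, h) - u (ν j) (g, h))‖ := by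
                  rw [sub_add_sub_cancel]
              _ ≤ ‖u (ν (j + t + 1)) (g, h) - u (ν (j + t)) (g, h)‖ +
                    ‖u (ν (j + t)) (g, h) - u (ν j) (g, h)‖ := norm_add_le _ _
              _ ≤ F (t, g * h⁻¹) + ∑ i ∈ Finset.range t, F (i, g * h⁻¹) := add_le_add h2 ih
              _ = ∑ i ∈ Finset.range (t + 1), F (i, g * h⁻¹) := by
                  rw [Finset.sum_range_succ, add_comm]
        refine (htel t).trans (Summable.sum_le_tsum _ (fun i _ => hF0 _) ?_)
        exact hswapfacts.1 (g * h⁻¹)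
      refine ⟨∑' x : G, |σ x|, ⟨σ, (summable_congr fun x => abs_of_nonneg (hσ0 x)).mpr hσsum,
        fun g h => (hdom g h).trans (le_abs_self _), rfl⟩, ?_⟩
      rw [tsum_congr fun x => abs_of_nonneg (hσ0 x)]
      exact hσtsum
    have hKmj : ∀ j : ℕ, kernelNorm (fun p : G × G => K p - u (ν j) p) ≤ 2 * (1/2 : ℝ) ^ j ∧
        (kernelDomSet (fun p : G × G => K p - u (ν j) p)).Nonempty := by
      intro j
      obtain ⟨c, hc, hcle⟩ := hdomKj j
      exact ⟨(kernelNorm_le hc).trans hcle, ⟨c, hc⟩⟩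
    have hKne : (kernelDomSet K).Nonempty := by
      obtain ⟨c, hc⟩ := (hKmj 0).2
      obtain ⟨d, hd⟩ := hune (ν 0)
      refine ⟨c + d, add_mem (fun p => ?_) hc hd⟩
      calc ‖K p‖ = ‖(K p - u (ν 0) p) + u (ν 0) p‖ := by rw [sub_add_cancel]
        _ ≤ ‖K p - u (ν 0) p‖ + ‖u (ν 0) p‖ := norm_add_le _ _
    refine ⟨K, (hmem K).mpr ⟨hKg, hKne⟩, ?_⟩
    rw [Metric.tendsto_atTop]
    intro ε hε
    obtain ⟨M, hM⟩ := hC (ε / 2) (by positivity)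
    have h2 : Tendsto (fun j : ℕ => 2 * (1/2 : ℝ) ^ j) atTop (𝓝 0) := by
      have := (tendsto_pow_atTop_nhds_zero_of_lt_one (by norm_num : (0:ℝ) ≤ 1/2)
        (by norm_num : (1/2 : ℝ) < 1)).const_mul 2
      simpa using this
    obtain ⟨j0, hj0⟩ := (Metric.tendsto_atTop.mp h2) (ε / 2) (by positivity)
    set j := max j0 M with hj
    have hjlt : 2 * (1/2 : ℝ) ^ j < ε / 2 := by
      have := hj0 j (le_max_left _ _)
      rwa [Real.dist_eq, sub_zero, abs_of_nonneg (by positivity)] at this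
    refine ⟨ν j, fun m hm => ?_⟩
    have hmM : M ≤ m := le_trans (le_trans (le_max_right j0 M) hmono.le_apply) hm
    have hνjM : M ≤ ν j := le_trans (le_max_right j0 M) hmono.le_apply
    have e2 : kernelDomSet (fun p : G × G => u (ν j) p - K p) =
        kernelDomSet (fun p : G × G => K p - u (ν j) p) :=
      domSet_congr fun p => norm_sub_rev _ _
    have htri : kernelNorm (u m - K) ≤ kernelNorm (u m - u (ν j)) +
        kernelNorm (fun p : G × G => u (ν j) p - K p) := by
      refine norm_add_le' (fun p => ?_) (hsubne m (ν j)) (e2 ▸ (hKmj j).2)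
      calc ‖(u m - K) p‖ = ‖((u m - u (ν j)) p) + (u (ν j) p - K p)‖ := by
            show ‖u m p - K p‖ = _
            rw [Pi.sub_apply, sub_add_sub_cancel]
        _ ≤ ‖(u m - u (ν j)) p‖ + ‖u (ν j) p - K p‖ := norm_add_le _ _
    have hA : kernelNorm (u m - u (ν j)) < ε / 2 := hM m hmM (ν j) hνjM
    have hB2 : kernelNorm (fun p : G × G => u (ν j) p - K p) ≤ 2 * (1/2 : ℝ) ^ j := by
      show sInf _ ≤ _
      rw [e2]
      exact (hKmj j).1
    rw [Real.dist_eq, sub_zero, abs_of_nonneg (CDK.norm_nonneg' _)]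
    calc kernelNorm (u m - K) ≤ kernelNorm (u m - u (ν j)) +
          kernelNorm (fun p : G × G => u (ν j) p - K p) := htri
      _ < ε / 2 + ε / 2 := add_lt_add_of_lt_of_le hA (hB2.trans hjlt.le)
      _ = ε := add_halves ε
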